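/- Let (f_α, τ_α)_{α∈Ω} and (g_β, ω_β)_{β∈Δ} be continuous 1-Schauder frames for a Banach space X: ‖x‖ = ∫_Ω |f_α(x)| dμ and x = ∫_Δ g_β(x) ω_β dν weakly. If C := sup_{α,β} |f_α(ω_β)| < ∞, then for every nonzero x ∈ X, μ({α : f_α(x) ≠ 0}) ≥ 1/C. -/

import Mathlib

open MeasureTheory

/-- Case `p = 1` of the functional continuous uncertainty principle: for continuous
1-Schauder frames `(f, τ)` over `(Ω, μ)` and `(g, ω)` over `(Δ, ν)` of a Banach space `X`
with `C = sup |f α (ω β)| < ∞`, every nonzero `x` satisfies `μ({α : f α x ≠ 0}) ≥ 1/C`. -/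
theorem continuous_uncertainty_principle_p_eq_one
    {Ω Δ : Type*} [MeasurableSpace Ω] [MeasurableSpace Δ]
    (μ : Measure Ω) (ν : Measure Δ)
    {X : Type*} [NormedAddCommGroup X] [NormedSpace ℂ X] [CompleteSpace X]
    (f : Ω → X →L[ℂ] ℂ) (τ : Ω → X) (g : Δ → X →L[ℂ] ℂ) (ω : Δ → X)
    (hf : ∀ x : X, ‖x‖ = ∫ α, ‖f α x‖ ∂μ)
    (hg : ∀ x : X, ‖x‖ = ∫ β, ‖g β x‖ ∂ν)
    (hgint : ∀ x : X, Integrable (fun β => ‖g β x‖) ν)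
    (hexp : ∀ (x : X) (α : Ω), f α x = ∫ β, g β x * f α (ω β) ∂ν)
    (C : ℝ) (hC : ∀ α β, ‖f α (ω β)‖ ≤ C)
    (x : X) (hx : x ≠ 0) :
    μ {α | f α x ≠ 0} ≥ ENNReal.ofReal (1 / C) := by
  rcases le_or_gt C 0 with hC0 | hCpos
  · have : ENNReal.ofReal (1 / C) = 0 :=
      ENNReal.ofReal_eq_zero.2 (one_div_nonpos.2 hC0)
    rw [this]; exact zero_le
  -- C > 0 case
  have hxnorm : (0:ℝ) < ‖x‖ := norm_pos_iff.2 hx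
  -- pointwise bound ‖f α x‖ ≤ C * ‖x‖
  have hbound : ∀ α, ‖f α x‖ ≤ C * ‖x‖ := by
    intro α
    calc ‖f α x‖ = ‖∫ β, g β x * f α (ω β) ∂ν‖ := by rw [hexp x α]
      _ ≤ ∫ β, ‖g β x * f α (ω β)‖ ∂ν := norm_integral_le_integral_norm _
      _ ≤ ∫ β, ‖g β x‖ * C ∂ν := by
          refine integral_mono_of_nonneg (Filter.Eventually.of_forall fun β => norm_nonneg _)
            ((hgint x).mul_const C) (Filter.Eventually.of_forall fun β => ?_)
          simp only [norm_mul]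
          exact mul_le_mul_of_nonneg_left (hC α β) (norm_nonneg _)
      _ = C * ‖x‖ := by rw [integral_mul_const, ← hg x, mul_comm]
  -- integrability of α ↦ ‖f α x‖
  have hint : Integrable (fun α => ‖f α x‖) μ := by
    by_contra h
    rw [hf x, integral_undef h] at hxnorm
    exact lt_irrefl 0 hxnorm
  set s : Set Ω := {α | f α x ≠ 0} with hs
  -- lintegral form
  have hlin : ENNReal.ofReal ‖x‖ = ∫⁻ α, ENNReal.ofReal ‖f α x‖ ∂μ := by
    rw [hf x]
    exact ofReal_integral_eq_lintegral_ofReal hint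
      (Filter.Eventually.of_forall fun α => norm_nonneg _)
  have hle : ∀ α, ENNReal.ofReal ‖f α x‖ ≤
      s.indicator (fun _ => ENNReal.ofReal (C * ‖x‖)) α := by
    intro α
    by_cases hα : f α x = 0
    · simp [hα]
    · rw [Set.indicator_of_mem (by exact hα : α ∈ s)]
      exact ENNReal.ofReal_le_ofReal (hbound α)
  have key : ENNReal.ofReal ‖x‖ ≤ ENNReal.ofReal (C * ‖x‖) * μ s := by
    calc ENNReal.ofReal ‖x‖ = ∫⁻ α, ENNReal.ofReal ‖f α x‖ ∂μ := hlin
      _ ≤ ∫⁻ α, s.indicator (fun _ => ENNReal.ofReal (C * ‖x‖)) α ∂μ :=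
          lintegral_mono hle
      _ ≤ ENNReal.ofReal (C * ‖x‖) * μ s := lintegral_indicator_const_le _ _
  -- conclude
  have hb : ENNReal.ofReal ‖x‖ ≠ 0 := (ENNReal.ofReal_pos.2 hxnorm).ne'
  have hb' : ENNReal.ofReal ‖x‖ ≠ ⊤ := ENNReal.ofReal_ne_top
  have h1 : (1 : ENNReal) * ENNReal.ofReal ‖x‖ ≤
      (ENNReal.ofReal C * μ s) * ENNReal.ofReal ‖x‖ := by
    rw [one_mul]
    calc ENNReal.ofReal ‖x‖ ≤ ENNReal.ofReal (C * ‖x‖) * μ s := key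
      _ = (ENNReal.ofReal C * μ s) * ENNReal.ofReal ‖x‖ := by
          rw [ENNReal.ofReal_mul hCpos.le]; ring
  have h2 : (1 : ENNReal) ≤ ENNReal.ofReal C * μ s :=
    (ENNReal.mul_le_mul_iff_left hb hb').1 h1
  have h3 : (1 : ENNReal) / ENNReal.ofReal C ≤ μ s := ENNReal.div_le_of_le_mul' h2
  calc ENNReal.ofReal (1 / C) = 1 / ENNReal.ofReal C := by
        rw [ENNReal.ofReal_div_of_pos hCpos, ENNReal.ofReal_one]
    _ ≤ μ s := h3
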